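/- arXiv:2210.08070 — 2 statements merged into one kernel-verified Lean document; each statement's English description precedes it below -/
import Mathlib

section
/- Leibniz law for standard Leibniz models: let A be a complete Heyting algebra equipped with its saturated Fidel structure N_x = {y ∈ A : x ∨ y = 1}, and let ‖·‖ be the standard Leibniz interpretation on V^A. Then Leibniz law holds: for every formula φ(x) with one free variable and all A-names u, v, ‖u ≈ v‖ ≤ ‖φ(u) → φ(v)‖. -/
universe u

/-- The universe `V^A` of `A`-names over a complete Heyting algebra `A`:
an `A`-name is a function from a set (of previously constructed `A`-names)
into `A`, here encoded by an indexing type `ι`, a family `elts` of names and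
the family `val` of their attached truth values. -/
inductive HName (A : Type u) : Type (u + 1) where
  | mk (ι : Type u) (elts : ι → HName A) (val : ι → A)

namespace HName

variable {A : Type u}

/-- The indexing type of (the domain of) a name. -/
def ι : HName A → Type u
  | mk ι _ _ => ι

/-- The members of (the domain of) a name. -/
def elts : (u : HName A) → u.ι → HName A
  | mk _ e _ => e

/-- The values attached by a name to the members of its domain. -/
def val : (u : HName A) → u.ι → A
  | mk _ _ v => v

/-- Ordinal rank of a name (used for the recursive definition of truth values). -/
noncomputable def rank : HName A → Ordinal.{u}
  | mk _ e _ => Ordinal.lsub fun i => (e i).rank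

theorem rank_lt {ι : Type u} (e : ι → HName A) (v : ι → A) (i : ι) :
    (e i).rank < (mk ι e v).rank := Ordinal.lt_lsub _ i

variable [Order.Frame A]

/-- The truth value `‖u ≈ v‖` of equality of two names, defined by the recursion
`‖u ≈ v‖ = ⨅_{x ∈ dom u} (u(x) ⇨ ‖x ∈ v‖) ⊓ ⨅_{y ∈ dom v} (v(y) ⇨ ‖y ∈ u‖)`,
where `‖x ∈ v‖ = ⨆_{y ∈ dom v} (v(y) ⊓ ‖y ≈ x‖)` is inlined. -/
noncomputable def eqVal : HName A → HName A → A
  | mk ι e a, mk κ f b =>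
      (⨅ i, a i ⇨ ⨆ j, b j ⊓ eqVal (f j) (e i)) ⊓
      (⨅ j, b j ⇨ ⨆ i, a i ⊓ eqVal (e i) (f j))
termination_by u v => max u.rank v.rank
decreasing_by
  · exact max_lt (lt_of_lt_of_le (rank_lt f b j) (le_max_right _ _))
      (lt_of_lt_of_le (rank_lt e a i) (le_max_left _ _))
  · exact max_lt (lt_of_lt_of_le (rank_lt e a i) (le_max_left _ _))
      (lt_of_lt_of_le (rank_lt f b j) (le_max_right _ _))

/-- The truth value `‖u ∈ v‖ = ⨆_{x ∈ dom v} (v(x) ⊓ ‖x ≈ u‖)` of membership. -/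
noncomputable def memVal (u v : HName A) : A :=
  ⨆ j : v.ι, v.val j ⊓ eqVal (v.elts j) u

end HName


/-- Terms of the first-order language of set theory expanded with all `A`-names
as constants: variables (de Bruijn indices) and names. -/
inductive Tm (A : Type u) (n : Nat) : Type (u + 1) where
  | var (i : Fin n) : Tm A n
  | name (u : HName A) : Tm A n

/-- Formulas of the first-order language with binary predicates `∈` and `≈`,
connectives `∧`, `∨`, `→`, `¬` and quantifiers `∃`, `∀`, with `A`-names as
constants; `Fml A n` are the formulas with free variables among `n` de Bruijn
indices, and the quantifiers bind the last variable of the context. -/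
inductive Fml (A : Type u) : Nat → Type (u + 1) where
  | mem {n} (t s : Tm A n) : Fml A n
  | eq {n} (t s : Tm A n) : Fml A n
  | and {n} (phi psi : Fml A n) : Fml A n
  | or {n} (phi psi : Fml A n) : Fml A n
  | imp {n} (phi psi : Fml A n) : Fml A n
  | neg {n} (phi : Fml A n) : Fml A n
  | ex {n} (phi : Fml A (n + 1)) : Fml A n
  | all {n} (phi : Fml A (n + 1)) : Fml A n

variable {A : Type u}

/-- Evaluation of a term under an assignment of names to the free variables. -/
def Tm.eval {n : Nat} : Tm A n → (Fin n → HName A) → HName A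
  | var i, rho => rho i
  | name u, _ => u

/-- Renaming (in particular, weakening) of the free variables of a term. -/
def Tm.rename {n m : Nat} (f : Fin n → Fin m) : Tm A n → Tm A m
  | var i => var (f i)
  | name u => name u

/-- Renaming (in particular, weakening) of the free variables of a formula. -/
def Fml.rename : {n m : Nat} → (Fin n → Fin m) → Fml A n → Fml A m
  | _, _, f, mem t s => mem (t.rename f) (s.rename f)
  | _, _, f, eq t s => eq (t.rename f) (s.rename f)
  | _, _, f, and phi psi => and (phi.rename f) (psi.rename f)
  | _, _, f, or phi psi => or (phi.rename f) (psi.rename f)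
  | _, _, f, imp phi psi => imp (phi.rename f) (psi.rename f)
  | _, _, f, neg phi => neg (phi.rename f)
  | _, _, f, ex phi => ex (phi.rename (Fin.snoc (Fin.castSucc ∘ f) (Fin.last _)))
  | _, _, f, all phi => all (phi.rename (Fin.snoc (Fin.castSucc ∘ f) (Fin.last _)))

/-- `φ ↔ ψ` abbreviates `(φ → ψ) ∧ (ψ → φ)`. -/
def Fml.iff {n : Nat} (phi psi : Fml A n) : Fml A n :=
  .and (.imp phi psi) (.imp psi phi)

/-- A (complete) Fidel structure for `C_ω` over the complete Heyting algebra
`A`: for each `x ∈ A`, `N x` is a nonempty set of "possible negations" of `x`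
such that `x ⊔ y = ⊤` for every `y ∈ N x` and, for every `y ∈ N x`, there is
`z ∈ N y` with `z ≤ x`. -/
def IsFidel [Order.Frame A] (N : A → Set A) : Prop :=
  ∀ x : A, (N x).Nonempty ∧ (∀ y ∈ N x, x ⊔ y = ⊤) ∧ ∀ y ∈ N x, ∃ z ∈ N y, z ≤ x

/-- A Leibniz truth-value interpretation on the `A`-names over the complete
`C_ω`-structure `⟨A, N⟩`: a map assigning to every formula (with names as
constants) and every assignment of names to its free variables a truth value in
`A`, satisfying the atomic clauses for `∈` and `≈`, the compositional clauses
for `∧`, `∨`, `→`, `∃`, `∀`, the clauses `‖¬φ‖ ∈ N ‖φ‖` and `‖¬¬φ‖ ≤ ‖φ‖` for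
the paraconsistent negation, and Leibniz law `‖u ≈ v‖ ≤ ‖φ(u) → φ(v)‖` for
every formula `φ(x)` with one free variable and all names `u`, `v`. -/
structure Interp (A : Type u) [Order.Frame A] (N : A → Set A) : Type (u + 1) where
  val : {n : Nat} → Fml A n → (Fin n → HName A) → A
  val_mem : ∀ {n} (t s : Tm A n) (rho : Fin n → HName A),
    val (.mem t s) rho = HName.memVal (t.eval rho) (s.eval rho)
  val_eq : ∀ {n} (t s : Tm A n) (rho : Fin n → HName A),
    val (.eq t s) rho = HName.eqVal (t.eval rho) (s.eval rho)
  val_and : ∀ {n} (phi psi : Fml A n) (rho : Fin n → HName A),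
    val (.and phi psi) rho = val phi rho ⊓ val psi rho
  val_or : ∀ {n} (phi psi : Fml A n) (rho : Fin n → HName A),
    val (.or phi psi) rho = val phi rho ⊔ val psi rho
  val_imp : ∀ {n} (phi psi : Fml A n) (rho : Fin n → HName A),
    val (.imp phi psi) rho = val phi rho ⇨ val psi rho
  val_ex : ∀ {n} (phi : Fml A (n + 1)) (rho : Fin n → HName A),
    val (.ex phi) rho = ⨆ u : HName A, val phi (Fin.snoc rho u)
  val_all : ∀ {n} (phi : Fml A (n + 1)) (rho : Fin n → HName A),
    val (.all phi) rho = ⨅ u : HName A, val phi (Fin.snoc rho u)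
  val_neg : ∀ {n} (phi : Fml A n) (rho : Fin n → HName A),
    val (.neg phi) rho ∈ N (val phi rho)
  val_negneg : ∀ {n} (phi : Fml A n) (rho : Fin n → HName A),
    val (.neg (.neg phi)) rho ≤ val phi rho
  leibniz : ∀ (phi : Fml A 1) (u v : HName A),
    HName.eqVal u v ≤ val phi (fun _ => u) ⇨ val phi (fun _ => v)


/-- The standard Leibniz interpretation on `V^A`: the compositional
interpretation with the atomic clauses for `∈` and `≈` and, for negation,
`‖¬ψ‖ = 1` whenever `ψ` is not of the form `¬χ`, and `‖¬¬ψ‖ = ‖ψ‖` whenever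
`ψ` is not of the form `¬χ`. -/
noncomputable def stdVal [Order.Frame A] : {n : Nat} → Fml A n → (Fin n → HName A) → A
  | _, .mem t s, rho => HName.memVal (t.eval rho) (s.eval rho)
  | _, .eq t s, rho => HName.eqVal (t.eval rho) (s.eval rho)
  | _, .and phi psi, rho => stdVal phi rho ⊓ stdVal psi rho
  | _, .or phi psi, rho => stdVal phi rho ⊔ stdVal psi rho
  | _, .imp phi psi, rho => stdVal phi rho ⇨ stdVal psi rho
  | _, .neg (.neg phi), rho => stdVal phi rho
  | _, .neg _, _ => ⊤
  | _, .ex phi, rho => ⨆ u : HName A, stdVal phi (Fin.snoc rho u)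
  | _, .all phi, rho => ⨅ u : HName A, stdVal phi (Fin.snoc rho u)

/-- The saturated Fidel structure on `A`: `N x = {y ∈ A : x ⊔ y = ⊤}`. -/
def saturatedN (A : Type u) [Order.Frame A] : A → Set A := fun x => {y : A | x ⊔ y = ⊤}

namespace HName

variable [Order.Frame A]

theorem eqVal_refl : ∀ u : HName A, eqVal u u = ⊤
  | mk ι e a => by
    rw [eqVal]
    refine top_unique (le_inf (le_iInf fun i => ?_) (le_iInf fun i => ?_)) <;>
    · rw [le_himp_iff, top_inf_eq]
      refine le_trans ?_ (le_iSup _ i)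
      rw [eqVal_refl (e i), inf_top_eq]

theorem eqVal_symm (u v : HName A) : eqVal u v = eqVal v u := by
  cases u; cases v; rw [eqVal, eqVal, inf_comm]

private theorem nadd3_lt {x y z a b c : Ordinal.{u}} (hx : x < a) (hy : y < b) (hz : z < c) :
    max (max x y) z < max (max a b) c :=
  max_lt_max (max_lt_max hx hy) hz

private theorem nadd3_comm (a b c : Ordinal.{u}) : max (max a b) c = max (max c b) a := by
  rw [max_comm (max a b) c, max_comm a b, ← max_assoc]

theorem eqVal_trans : ∀ u v w : HName A, eqVal u v ⊓ eqVal v w ≤ eqVal u w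
  | mk ι e a, mk κ f b, mk μ g c => by
    rw [eqVal, eqVal, eqVal]
    set Xuv := ⨅ i, a i ⇨ ⨆ j, b j ⊓ eqVal (f j) (e i) with hXuv
    set Yuv := ⨅ j, b j ⇨ ⨆ i, a i ⊓ eqVal (e i) (f j) with hYuv
    set Xvw := ⨅ j, b j ⇨ ⨆ k, c k ⊓ eqVal (g k) (f j) with hXvw
    set Yvw := ⨅ k, c k ⇨ ⨆ j, b j ⊓ eqVal (f j) (g k) with hYvw
    refine le_inf (le_iInf fun i => ?_) (le_iInf fun k => ?_)
    · rw [le_himp_iff]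
      have h1 : Xuv ⊓ Yuv ⊓ (Xvw ⊓ Yvw) ⊓ a i ≤ (⨆ j, b j ⊓ eqVal (f j) (e i)) ⊓ Xvw := by
        refine le_inf ?_ (le_trans inf_le_left (le_trans inf_le_right inf_le_left))
        refine le_trans (inf_le_inf_right _ ?_) himp_inf_le
        exact le_trans inf_le_left (le_trans inf_le_left (by rw [hXuv]; exact iInf_le _ i))
      refine le_trans h1 ?_
      rw [iSup_inf_eq]
      refine iSup_le fun j => ?_
      have h2 : b j ⊓ eqVal (f j) (e i) ⊓ Xvw ≤
          (⨆ k, c k ⊓ eqVal (g k) (f j)) ⊓ eqVal (f j) (e i) := by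
        refine le_inf ?_ (le_trans inf_le_left inf_le_right)
        rw [inf_comm (b j), inf_assoc]
        refine le_trans inf_le_right ?_
        rw [inf_comm]
        exact le_trans (inf_le_inf_right _ (by rw [hXvw]; exact iInf_le _ j)) himp_inf_le
      refine le_trans h2 ?_
      rw [iSup_inf_eq]
      refine iSup_le fun k => le_trans ?_ (le_iSup _ k)
      rw [inf_assoc]
      exact inf_le_inf_left _ (eqVal_trans (g k) (f j) (e i))
    · rw [le_himp_iff]
      have h1 : Xuv ⊓ Yuv ⊓ (Xvw ⊓ Yvw) ⊓ c k ≤ (⨆ j, b j ⊓ eqVal (f j) (g k)) ⊓ Yuv := by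
        refine le_inf ?_ (le_trans inf_le_left (le_trans inf_le_left inf_le_right))
        refine le_trans (inf_le_inf_right _ ?_) himp_inf_le
        have hy : Yvw ≤ c k ⇨ ⨆ j, b j ⊓ eqVal (f j) (g k) := by
          rw [hYvw]; exact iInf_le _ k
        exact le_trans inf_le_right (le_trans inf_le_right hy)
      refine le_trans h1 ?_
      rw [iSup_inf_eq]
      refine iSup_le fun j => ?_
      have h2 : b j ⊓ eqVal (f j) (g k) ⊓ Yuv ≤
          (⨆ i, a i ⊓ eqVal (e i) (f j)) ⊓ eqVal (f j) (g k) := by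
        refine le_inf ?_ (le_trans inf_le_left inf_le_right)
        rw [inf_comm (b j), inf_assoc]
        refine le_trans inf_le_right ?_
        rw [inf_comm]
        exact le_trans (inf_le_inf_right _ (by rw [hYuv]; exact iInf_le _ j)) himp_inf_le
      refine le_trans h2 ?_
      rw [iSup_inf_eq]
      refine iSup_le fun i => le_trans ?_ (le_iSup _ i)
      rw [inf_assoc]
      exact inf_le_inf_left _ (eqVal_trans (e i) (f j) (g k))
termination_by u v w => max (max u.rank v.rank) w.rank
decreasing_by
  · calc max (max (rank (g k)) (rank (f j))) (rank (e i))
        < max (max (rank (mk μ g c)) (rank (mk κ f b))) (rank (mk ι e a)) :=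
          nadd3_lt (rank_lt g c k) (rank_lt f b j) (rank_lt e a i)
      _ = max (max (rank (mk ι e a)) (rank (mk κ f b))) (rank (mk μ g c)) := nadd3_comm _ _ _
  · exact nadd3_lt (rank_lt e a i) (rank_lt f b j) (rank_lt g c k)

theorem eqVal_inf_val_le_memVal : ∀ (u v : HName A) (i : u.ι), eqVal u v ⊓ u.val i ≤ memVal (u.elts i) v
  | mk ι e a, mk κ f b, i => by
    rw [eqVal]
    refine le_trans (inf_le_inf_right _ (le_trans inf_le_left (iInf_le _ i))) ?_
    exact le_trans himp_inf_le le_rfl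

theorem memVal_congr_elem (x y b : HName A) : eqVal x y ⊓ memVal x b ≤ memVal y b := by
  rw [memVal, memVal, inf_comm, iSup_inf_eq]
  refine iSup_le fun j => le_trans ?_ (le_iSup _ j)
  rw [inf_assoc]
  exact inf_le_inf_left _ (eqVal_trans _ _ _)

theorem memVal_congr_set (b b' x : HName A) : eqVal b b' ⊓ memVal x b ≤ memVal x b' := by
  conv_lhs => rw [memVal]
  rw [inf_iSup_eq]
  refine iSup_le fun j => ?_
  have h1 : eqVal b b' ⊓ b.val j ≤ memVal (b.elts j) b' := eqVal_inf_val_le_memVal b b' j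
  calc eqVal b b' ⊓ (b.val j ⊓ eqVal (b.elts j) x)
      = eqVal b b' ⊓ b.val j ⊓ eqVal (b.elts j) x := by rw [inf_assoc]
    _ ≤ memVal (b.elts j) b' ⊓ eqVal (b.elts j) x := inf_le_inf_right _ h1
    _ ≤ memVal x b' := by rw [inf_comm]; exact memVal_congr_elem _ _ _

theorem memVal_congr (x y b b' : HName A) :
    (eqVal x y ⊓ eqVal b b') ⊓ memVal x b ≤ memVal y b' := by
  rw [inf_comm (eqVal x y), inf_assoc]
  refine le_trans (inf_le_inf_left _ ?_) (memVal_congr_set b b' y)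
  exact memVal_congr_elem x y b

end HName

section Congr

open HName

variable [Order.Frame A]

theorem eval_congr {n : Nat} (t : Tm A n) (rho sigma : Fin n → HName A) :
    (⨅ i, eqVal (rho i) (sigma i)) ≤ eqVal (t.eval rho) (t.eval sigma) := by
  cases t with
  | var i => exact iInf_le _ i
  | name u => simp [Tm.eval, eqVal_refl]

theorem iInf_eqVal_symm {n : Nat} (rho sigma : Fin n → HName A) :
    (⨅ i, eqVal (rho i) (sigma i)) = ⨅ i, eqVal (sigma i) (rho i) :=
  iInf_congr fun _ => eqVal_symm _ _

theorem iInf_eqVal_snoc {n : Nat} (rho sigma : Fin n → HName A) (w : HName A) :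
    (⨅ i, eqVal (rho i) (sigma i)) ≤
      ⨅ i : Fin (n + 1), eqVal ((Fin.snoc rho w : Fin (n + 1) → HName A) i)
        ((Fin.snoc sigma w : Fin (n + 1) → HName A) i) := by
  refine le_iInf fun i => ?_
  refine Fin.lastCases ?_ (fun j => ?_) i
  · simp [eqVal_refl]
  · simp only [Fin.snoc_castSucc]
    exact iInf_le _ j

theorem stdVal_congr : ∀ {n : Nat} (phi : Fml A n) (rho sigma : Fin n → HName A),
    (⨅ i, eqVal (rho i) (sigma i)) ≤ stdVal phi rho ⇨ stdVal phi sigma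
  | _, .mem t s, rho, sigma => by
    rw [le_himp_iff]
    simp only [stdVal]
    exact le_trans (inf_le_inf_right _
      (le_inf (eval_congr t rho sigma) (eval_congr s rho sigma))) (memVal_congr _ _ _ _)
  | _, .eq t s, rho, sigma => by
    rw [le_himp_iff]
    simp only [stdVal]
    have h1 : (⨅ i, eqVal (rho i) (sigma i)) ≤ eqVal (t.eval sigma) (t.eval rho) :=
      le_trans (iInf_eqVal_symm rho sigma).le (eval_congr t sigma rho)
    refine le_trans (inf_le_inf_right _ (le_inf h1 (eval_congr s rho sigma))) ?_
    rw [inf_right_comm]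
    exact le_trans (inf_le_inf_right _ (eqVal_trans _ _ _)) (eqVal_trans _ _ _)
  | _, .and phi psi, rho, sigma => by
    rw [le_himp_iff]
    simp only [stdVal]
    refine le_inf ?_ ?_
    · exact le_trans (inf_le_inf_left _ inf_le_left)
        (le_himp_iff.mp (stdVal_congr phi rho sigma))
    · exact le_trans (inf_le_inf_left _ inf_le_right)
        (le_himp_iff.mp (stdVal_congr psi rho sigma))
  | _, .or phi psi, rho, sigma => by
    rw [le_himp_iff]
    simp only [stdVal]
    rw [inf_sup_left]
    exact sup_le (le_trans (le_himp_iff.mp (stdVal_congr phi rho sigma)) le_sup_left)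
      (le_trans (le_himp_iff.mp (stdVal_congr psi rho sigma)) le_sup_right)
  | _, .imp phi psi, rho, sigma => by
    simp only [stdVal]
    rw [le_himp_iff, le_himp_iff]
    have hE : (⨅ i, eqVal (rho i) (sigma i)) ⊓ (stdVal phi rho ⇨ stdVal psi rho) ⊓
        stdVal phi sigma ≤ ⨅ i, eqVal (rho i) (sigma i) :=
      le_trans inf_le_left inf_le_left
    have h1 : (⨅ i, eqVal (rho i) (sigma i)) ⊓ stdVal phi sigma ≤ stdVal phi rho :=
      le_himp_iff.mp (le_trans (iInf_eqVal_symm rho sigma).le (stdVal_congr phi sigma rho))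
    have hphi : (⨅ i, eqVal (rho i) (sigma i)) ⊓ (stdVal phi rho ⇨ stdVal psi rho) ⊓
        stdVal phi sigma ≤ stdVal phi rho :=
      le_trans (le_inf hE inf_le_right) h1
    have hpsi : (⨅ i, eqVal (rho i) (sigma i)) ⊓ (stdVal phi rho ⇨ stdVal psi rho) ⊓
        stdVal phi sigma ≤ stdVal psi rho :=
      le_trans (le_inf (le_trans inf_le_left inf_le_right) hphi) himp_inf_le
    exact le_trans (le_inf hE hpsi) (le_himp_iff.mp (stdVal_congr psi rho sigma))
  | _, .neg (.neg phi), rho, sigma => by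
    simp only [stdVal]
    exact stdVal_congr phi rho sigma
  | _, .neg (.mem t s), rho, sigma => by simp [stdVal]
  | _, .neg (.eq t s), rho, sigma => by simp [stdVal]
  | _, .neg (.and phi psi), rho, sigma => by simp [stdVal]
  | _, .neg (.or phi psi), rho, sigma => by simp [stdVal]
  | _, .neg (.imp phi psi), rho, sigma => by simp [stdVal]
  | _, .neg (.ex phi), rho, sigma => by simp [stdVal]
  | _, .neg (.all phi), rho, sigma => by simp [stdVal]
  | _, .ex phi, rho, sigma => by
    simp only [stdVal]
    rw [le_himp_iff, inf_iSup_eq]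
    refine iSup_le fun w => le_trans ?_ (le_iSup _ w)
    exact le_himp_iff.mp (le_trans (iInf_eqVal_snoc rho sigma w) (stdVal_congr phi _ _))
  | _, .all phi, rho, sigma => by
    simp only [stdVal]
    rw [le_himp_iff]
    refine le_iInf fun w => ?_
    refine le_trans (inf_le_inf (iInf_eqVal_snoc rho sigma w) (iInf_le _ w)) ?_
    exact le_himp_iff.mp (stdVal_congr phi _ _)

end Congr

/-- Leibniz law for standard Leibniz models: over any complete Heyting algebra
`A` equipped with its saturated Fidel structure, the standard Leibniz
interpretation satisfies Leibniz law: for every formula `φ(x)` with one free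
variable and all `A`-names `u`, `v`, `‖u ≈ v‖ ≤ ‖φ(u) → φ(v)‖`. -/
theorem stdVal_leibniz {A : Type u} [Order.Frame A] (phi : Fml A 1) (u v : HName A) :
    HName.eqVal u v ≤ stdVal phi (fun _ => u) ⇨ stdVal phi (fun _ => v) := by
  exact le_trans (le_iInf fun _ => le_rfl) (stdVal_congr phi (fun _ => u) (fun _ => v))
end

section
/- Failure of Leibniz law in the algebraic three-valued model: let H₃ be the three-element Heyting chain {0, ½, 1} with Gödel implication, and interpret negation compositionally by the dual-pseudocomplement operation ¬0 = 1, ¬½ = 1, ¬1 = 0, setting ‖¬φ‖ = ¬‖φ‖. Then for every H₃-name w, taking the names u = {⟨w, ½⟩} and v = {⟨w, 1⟩}, one has ‖u ≈ v‖ = ½, ‖¬(w ∈ u)‖ = 1 and ‖¬(w ∈ v)‖ = 0; consequently ‖u ≈ v‖ ≰ ‖¬(w ∈ u) → ¬(w ∈ v)‖, so Leibniz law fails for the formula ¬(w ∈ x). -/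
universe u

/-- The three-element Heyting chain `H₃ = {0, ½, 1}`, modeled as `Fin 3` with
`0 = 0`, `½ = 1` and `1 = 2` (a complete linear order, hence a complete Heyting
algebra with the Gödel implication). -/
abbrev H3 : Type := Fin 3

/-- The dual-pseudocomplement negation on `H₃`: `¬0 = 1`, `¬½ = 1`, `¬1 = 0`. -/
def negH3 : H3 → H3
  | 0 => 2
  | 1 => 2
  | 2 => 0

theorem HName.eqVal_self {A : Type u} [Order.Frame A] : ∀ u : HName A, HName.eqVal u u = ⊤
  | .mk ι e a => by
    rw [HName.eqVal]
    refine le_antisymm le_top (le_inf (le_iInf fun i => ?_) (le_iInf fun i => ?_)) <;>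
    · rw [top_le_iff, himp_eq_top_iff]
      refine le_trans ?_ (le_iSup _ i)
      rw [HName.eqVal_self (e i), inf_top_eq]

open HName in
/-- Failure of Leibniz law in the algebraic three-valued model `V^{H₃}`, where
negation is interpreted compositionally via the dual pseudocomplement,
`‖¬φ‖ = ¬‖φ‖`: for every `H₃`-name `w`, the names `u = {⟨w, ½⟩}` and
`v = {⟨w, 1⟩}` satisfy `‖u ≈ v‖ = ½`, `‖¬(w ∈ u)‖ = 1` and `‖¬(w ∈ v)‖ = 0`;
consequently `‖u ≈ v‖ ≰ ‖¬(w ∈ u) → ¬(w ∈ v)‖`, i.e. Leibniz law fails for the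
formula `¬(w ∈ x)`. -/
theorem leibniz_fails_H3 (w : HName H3) :
    eqVal (HName.mk PUnit (fun _ => w) (fun _ => (1 : H3)))
        (HName.mk PUnit (fun _ => w) (fun _ => (2 : H3))) = (1 : H3) ∧
      negH3 (memVal w (HName.mk PUnit (fun _ => w) (fun _ => (1 : H3)))) = (2 : H3) ∧
      negH3 (memVal w (HName.mk PUnit (fun _ => w) (fun _ => (2 : H3)))) = (0 : H3) ∧
      ¬ eqVal (HName.mk PUnit (fun _ => w) (fun _ => (1 : H3)))
            (HName.mk PUnit (fun _ => w) (fun _ => (2 : H3))) ≤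
          negH3 (memVal w (HName.mk PUnit (fun _ => w) (fun _ => (1 : H3)))) ⇨
            negH3 (memVal w (HName.mk PUnit (fun _ => w) (fun _ => (2 : H3)))) := by
  rw [eqVal, memVal, memVal]
  simp only [HName.ι, HName.val, HName.elts, HName.eqVal_self, inf_top_eq, ciSup_unique,
    ciInf_unique]
  refine ⟨?_, ?_, ?_, ?_⟩ <;> decide
end
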